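/- One has L ∩ τL = {0} and L[τ] = L ⊕ τL as ℤ-modules. -/

import Mathlib

open Polynomial Quaternion

noncomputable section

set_option maxRecDepth 8000
set_option synthInstance.maxHeartbeats 1000000
set_option maxHeartbeats 1000000

def f5 : ℚ[X] := X ^ 2 - C 5

instance f5_irred : Fact (Irreducible f5) := ⟨by
  unfold f5
  apply X_pow_sub_C_irreducible_of_prime Nat.prime_two
  intro b hb
  have h5 : Irrational (Real.sqrt 5) := (Nat.prime_five).irrational_sqrt
  have hb' : ((b : ℝ)) ^ 2 = 5 := by exact_mod_cast congrArg (fun q : ℚ => (q : ℝ)) hb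
  have heq : Real.sqrt 5 = |(b : ℝ)| := by
    rw [← hb', Real.sqrt_sq_eq_abs]
  rw [heq] at h5
  exact h5 ⟨|b|, by push_cast; ring⟩⟩

abbrev K : Type := AdjoinRoot f5

instance : Field K := inferInstance
instance : SMul K (Quaternion K) := inferInstance
instance : Algebra K (Quaternion K) := inferInstance

def sqrt5 : K := AdjoinRoot.root f5

lemma sqrt5_sq : sqrt5 ^ 2 = 5 := by
  have h : eval₂ (AdjoinRoot.of f5) (AdjoinRoot.root f5) (X ^ 2 - C 5) = 0 :=
    AdjoinRoot.eval₂_root f5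
  rw [eval₂_sub, eval₂_pow, eval₂_X, eval₂_C, sub_eq_zero] at h
  show AdjoinRoot.root f5 ^ 2 = 5
  rw [h]
  simp

def conjK : K →+* K :=
  AdjoinRoot.lift (algebraMap ℚ K) (-sqrt5) (by
    simp only [f5, eval₂_sub, eval₂_pow, eval₂_X, eval₂_C, sub_eq_zero]
    have h : (-sqrt5) ^ 2 = sqrt5 ^ 2 := by ring
    rw [h, sqrt5_sq]
    simp)

def τ : K := (1 + sqrt5) / 2

abbrev ℍK := Quaternion K

def twist (x : ℍK) : ℍK := ⟨conjK x.re, conjK x.imI, conjK x.imK, conjK x.imJ⟩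

def icoB : Fin 4 → ℍK :=
  ![1, ⟨0,1,0,0⟩, ⟨1/2,1/2,1/2,1/2⟩, ⟨(1-τ)/2, τ/2, 0, 1/2⟩]

def Ico : AddSubgroup ℍK :=
  AddSubgroup.closure (Set.range icoB ∪ Set.range fun i => τ • icoB i)

def lB : Fin 4 → ℍK :=
  ![1, ⟨-(1/2),1/2,1/2,1/2⟩, ⟨0,-1,0,0⟩, ⟨0,1/2,(τ-1)/2,-(τ/2)⟩]

def LatA4 : AddSubgroup ℍK := AddSubgroup.closure (Set.range lB)

def LatATau : AddSubgroup ℍK :=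
  AddSubgroup.closure (Set.range lB ∪ Set.range fun i => τ • lB i)


def tauLat : AddSubgroup ℍK := LatA4.map (DistribMulAction.toAddMonoidHom ℍK τ)


lemma conjK_sqrt5 : conjK sqrt5 = -sqrt5 := by
  simp [conjK, sqrt5, AdjoinRoot.lift_root]

lemma conjK_two : conjK 2 = 2 := map_ofNat conjK 2

lemma conjK_tau : conjK τ = 1 - τ := by
  simp only [τ, map_div₀, map_add, map_one, conjK_sqrt5, conjK_two]
  ring

def twistHom : ℍK →+ ℍK where
  toFun := twist
  map_zero' := by
    ext <;> simp [twist]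
  map_add' x y := by
    ext <;> simp [twist, map_add] <;> rfl

lemma twist_smul (s : K) (q : ℍK) : twist (s • q) = conjK s • twist q := by
  ext <;> simp [twist, map_mul] <;> rfl

lemma twist_lB (i : Fin 4) : twist (lB i) = lB i := by
  fin_cases i <;>
    ext <;>
      simp [twist, lB, map_div₀, map_sub, map_neg, map_one, conjK_tau, conjK_two] <;> ring

lemma twist_fix {x : ℍK} (hx : x ∈ LatA4) : twist x = x := by
  refine AddSubgroup.closure_induction ?_ ?_ ?_ ?_ hx
  · rintro x ⟨i, rfl⟩
    exact twist_lB i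
  · exact twistHom.map_zero
  · intro a b _ _ ha hb
    have := twistHom.map_add a b
    simpa [twistHom, ha, hb] using this
  · intro a _ ha
    have := twistHom.map_neg a
    simpa [twistHom, ha] using this

instance : CharZero K := charZero_of_injective_algebraMap (algebraMap ℚ K).injective

lemma sqrt5_ne_zero : sqrt5 ≠ 0 := by
  intro h
  have h5 : (5 : K) = 0 := by rw [← sqrt5_sq, h]; ring
  norm_num at h5

/-- L ∩ τL = {0} and L[τ] = L ⊕ τL as ℤ-modules. -/
theorem L_inter_tauL_and_direct_sum :
    LatA4 ⊓ tauLat = ⊥ ∧ LatA4 ⊔ tauLat = LatATau := by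
  constructor
  · rw [AddSubgroup.eq_bot_iff_forall]
    intro x hx
    obtain ⟨hxL, hxT⟩ := hx
    obtain ⟨y, hyL, hyx⟩ := hxT
    have hyx' : τ • y = x := hyx
    have h1 : twist x = x := twist_fix hxL
    have h2 : twist x = (1 - τ) • y := by
      rw [← hyx', twist_smul, conjK_tau, twist_fix hyL]
    have h3 : τ • y = (1 - τ) • y := by rw [hyx']; rw [← h1, h2]
    have h4 : (τ - (1 - τ)) • y = 0 := by
      rw [sub_smul, h3, sub_self]
    have h5 : (τ - (1 - τ)) = sqrt5 := by
      have h2 : (2 : K) ≠ 0 := two_ne_zero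
      field_simp [τ]
      simp only [τ]
      ring
    rw [h5, smul_eq_zero] at h4
    rcases h4 with h | h
    · exact absurd h sqrt5_ne_zero
    · rw [← hyx', h, smul_zero]
  · rw [LatATau, AddSubgroup.closure_union, tauLat, LatA4, AddMonoidHom.map_closure]
    congr 2
    ext x
    simp
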